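/- Let G be a graph with a tree decomposition of width w, and suppose some bag B contains all four vertices {u,v,w,x} of a square of a ladder L contained in G. Then the graph G' obtained by inserting a new rung into the ladder (adding two new adjacent vertices u', v' with u' adjacent to u and w, v' adjacent to v and x, deleting edges {u,w} and {v,x}) has a tree decomposition of width max(w, 4). In particular if w ≥ 4 then tw(G') ≤ tw(G). -/

import Mathlib

open SimpleGraph

/-- The ladder of length `k`: the `2 × (k+1)` grid graph. -/
def ladder (k : ℕ) : SimpleGraph (Fin 2 × Fin (k + 1)) :=
  SimpleGraph.fromRel fun p q =>
    (p.1 = q.1 ∧ p.2.val + 1 = q.2.val) ∨ (p.2 = q.2 ∧ p.1 ≠ q.1)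

/-- `G` contains a ladder of length `k`: an induced copy of the `2 × (k+1)` grid,
attached to the rest of `G` only via its four cornerpoints (the vertices in columns `0` and `k`). -/
structure ContainsLadder {V : Type} (G : SimpleGraph V) (k : ℕ) where
  f : Fin 2 × Fin (k + 1) → V
  inj : Function.Injective f
  induced : ∀ p q, G.Adj (f p) (f q) ↔ (ladder k).Adj p q
  attach : ∀ p : Fin 2 × Fin (k + 1), p.2.val ≠ 0 → p.2.val ≠ k →
    ∀ v : V, G.Adj (f p) v → v ∈ Set.range f

/-- The two horizontal edges of square `i` of the ladder form an edge cut of `G`. -/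
def ContainsLadder.SquareCut {V : Type} {G : SimpleGraph V} {k : ℕ}
    (L : ContainsLadder G k) (i : Fin k) : Prop :=
  ¬ (G.deleteEdges {s(L.f (0, i.castSucc), L.f (0, i.succ)),
      s(L.f (1, i.castSucc), L.f (1, i.succ))}).Connected

/-- The ladder is disconnecting: the horizontal edges of some square form an edge cut. -/
def ContainsLadder.Disconnects {V : Type} {G : SimpleGraph V} {k : ℕ}
    (L : ContainsLadder G k) : Prop :=
  ∃ i : Fin k, L.SquareCut i

/-- A tree decomposition of a graph. -/
structure TreeDecomp {V : Type} (G : SimpleGraph V) where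
  ι : Type
  [fin : Fintype ι]
  tree : SimpleGraph ι
  isTree : tree.IsTree
  bag : ι → Finset V
  cover_vertex : ∀ v : V, ∃ i, v ∈ bag i
  cover_edge : ∀ ⦃u v : V⦄, G.Adj u v → ∃ i, u ∈ bag i ∧ v ∈ bag i
  bag_connected : ∀ v : V, (tree.induce {i | v ∈ bag i}).Connected

/-- The width of a tree decomposition: maximum bag size minus one. -/
def TreeDecomp.width {V : Type} {G : SimpleGraph V} (td : TreeDecomp G) : ℕ :=
  letI := td.fin
  (Finset.univ.sup fun i => (td.bag i).card) - 1

/-- The treewidth of a graph: minimum width over all tree decompositions. -/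
noncomputable def treewidth {V : Type} (G : SimpleGraph V) : ℕ :=
  sInf (Set.range fun td : TreeDecomp G => td.width)

/-- `H` is a minor of `G`: witnessed by pairwise disjoint nonempty connected branch sets. -/
def IsMinor {W V : Type} (H : SimpleGraph W) (G : SimpleGraph V) : Prop :=
  ∃ φ : W → Set V, (∀ w, (φ w).Nonempty) ∧ (∀ w, (G.induce (φ w)).Connected) ∧
    (∀ w w', w ≠ w' → Disjoint (φ w) (φ w')) ∧
    (∀ w w', H.Adj w w' → ∃ u ∈ φ w, ∃ v ∈ φ w', G.Adj u v)

/-- Lengthen the ladder `L` by `m` squares, by inserting `m` new rungs between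
columns `0` and `1` (subdividing the two horizontal edges and adding rungs). -/
def extendLadder {V : Type} (G : SimpleGraph V) {k : ℕ} (L : ContainsLadder G k) (m : ℕ) :
    SimpleGraph (V ⊕ (Fin 2 × Fin m)) :=
  SimpleGraph.fromRel fun p q =>
    (∃ u v : V, p = Sum.inl u ∧ q = Sum.inl v ∧ G.Adj u v ∧
      (m ≠ 0 → ∀ a : Fin 2, s(u, v) ≠ s(L.f (a, 0), L.f (a, 1)))) ∨
    (∃ (a : Fin 2) (j : Fin m), j.val = 0 ∧ p = Sum.inl (L.f (a, 0)) ∧ q = Sum.inr (a, j)) ∨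
    (∃ (a : Fin 2) (j : Fin m), j.val = m - 1 ∧ p = Sum.inr (a, j) ∧ q = Sum.inl (L.f (a, 1))) ∨
    (∃ (a : Fin 2) (j j' : Fin m), j.val + 1 = j'.val ∧ p = Sum.inr (a, j) ∧ q = Sum.inr (a, j')) ∨
    (∃ (a b : Fin 2) (j : Fin m), a ≠ b ∧ p = Sum.inr (a, j) ∧ q = Sum.inr (b, j))

/-- Insert one new rung into square `i` of the ladder `L`: two new vertices `inr 0, inr 1`
subdividing the horizontal edges of square `i`, joined by an edge. -/
def insertRung {V : Type} (G : SimpleGraph V) {k : ℕ} (L : ContainsLadder G k) (i : Fin k) :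
    SimpleGraph (V ⊕ Fin 2) :=
  SimpleGraph.fromRel fun p q =>
    (∃ u v : V, p = Sum.inl u ∧ q = Sum.inl v ∧ G.Adj u v ∧
      ∀ a : Fin 2, s(u, v) ≠ s(L.f (a, i.castSucc), L.f (a, i.succ))) ∨
    (∃ a : Fin 2, p = Sum.inl (L.f (a, i.castSucc)) ∧ q = Sum.inr a) ∨
    (∃ a : Fin 2, p = Sum.inr a ∧ q = Sum.inl (L.f (a, i.succ))) ∨
    (p = Sum.inr (0 : Fin 2) ∧ q = Sum.inr (1 : Fin 2))

/-- Contract the edge `{u, v}` of `G`: merge `v` into `u`. -/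
def contractEdge {V : Type} (G : SimpleGraph V) (u v : V) : SimpleGraph {x : V // x ≠ v} :=
  SimpleGraph.fromRel fun x y =>
    G.Adj x.val y.val ∨ (x.val = u ∧ G.Adj v y.val) ∨ (y.val = u ∧ G.Adj x.val v)

/-- Subdivide the edge `{u, v}` of `G` with a new vertex. -/
def subdivide {V : Type} (G : SimpleGraph V) (u v : V) : SimpleGraph (V ⊕ Unit) :=
  SimpleGraph.fromRel fun p q =>
    (∃ x y : V, p = Sum.inl x ∧ q = Sum.inl y ∧ G.Adj x y ∧ s(x, y) ≠ s(u, v)) ∨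
    (p = Sum.inl u ∧ q = Sum.inr ()) ∨ (p = Sum.inl v ∧ q = Sum.inr ())

/-- Suppress the degree-2 vertex `v` with neighbours `a` and `b`:
delete `v` and add the edge `{a, b}` (if not already present). -/
def suppress {V : Type} (G : SimpleGraph V) (v a b : V) : SimpleGraph {x : V // x ≠ v} :=
  SimpleGraph.fromRel fun x y =>
    G.Adj x.val y.val ∨ (x.val = a ∧ y.val = b)

/-- A graph is chordal if every cycle on at least 4 vertices has a chord. -/
def IsChordal {V : Type} (G : SimpleGraph V) : Prop :=
  ∀ n : ℕ, ∀ f : Fin (n + 4) → V, Function.Injective f →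
    (∀ i : Fin (n + 4), G.Adj (f i) (f (i + 1))) →
    ∃ i j : Fin (n + 4), i ≠ j ∧ j ≠ i + 1 ∧ i ≠ j + 1 ∧ G.Adj (f i) (f j)

/-- The induced subgraph on `S` has no cutvertex. -/
def NoCutvertex {V : Type} (G : SimpleGraph V) (S : Set V) : Prop :=
  ∀ v ∈ S, ∀ x y : ↥(S \ {v}), (G.induce (S \ {v})).Reachable x y

/-- `S` is a block (biconnected component) of `G`: a maximal connected
vertex set without a cutvertex. -/
def IsBlock {V : Type} (G : SimpleGraph V) (S : Set V) : Prop :=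
  S.Nonempty ∧ (G.induce S).Connected ∧ NoCutvertex G S ∧
  ∀ T : Set V, S ⊆ T → (G.induce T).Connected → NoCutvertex G T → T = S

section AuxLemmas

open SimpleGraph

/-- Add a pendant leaf adjacent to `r`. -/
def addLeaf {ι : Type} (T : SimpleGraph ι) (r : ι) : SimpleGraph (ι ⊕ Unit) where
  Adj p q := match p, q with
    | .inl a, .inl b => T.Adj a b
    | .inl a, .inr _ => a = r
    | .inr _, .inl b => b = r
    | .inr _, .inr _ => False
  symm := ⟨by rintro (a | a) (b | b) h <;> first | exact h.symm | exact h | exact h.elim⟩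
  loopless := ⟨by rintro (a | a) h <;> first | exact T.irrefl h | exact h⟩

lemma addLeaf_edge_mem {ι : Type} {T : SimpleGraph ι} {r : ι} :
    ∀ {x z : ι ⊕ Unit} (q : (addLeaf T r).Walk x z), z = .inr () →
    x ≠ .inr () → s((.inl r : ι ⊕ Unit), (.inr () : ι ⊕ Unit)) ∈ q.edges := by
  intro x z q
  induction q with
  | nil => rintro rfl h; exact absurd rfl h
  | @cons x y _ h q ih =>
    rintro rfl _
    by_cases hy : y = Sum.inr ()
    · subst hy
      have hx : x = Sum.inl r := by
        cases x with
        | inl a => exact congrArg Sum.inl (show a = r from h)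
        | inr u => exact (show False from h).elim
      subst hx
      rw [SimpleGraph.Walk.edges_cons]
      exact List.mem_cons_self
    · rw [SimpleGraph.Walk.edges_cons]
      exact List.mem_cons_of_mem _ (ih rfl hy)

lemma addLeaf_walk_proj {ι : Type} {T : SimpleGraph ι} {r : ι} :
    ∀ {x y : ι ⊕ Unit} (q : (addLeaf T r).Walk x y), (Sum.inr () : ι ⊕ Unit) ∉ q.support →
    ∃ (a b : ι) (q' : T.Walk a b), x = Sum.inl a ∧ y = Sum.inl b ∧
      q.support = q'.support.map Sum.inl ∧ q.edges = q'.edges.map (Sym2.map Sum.inl) := by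
  intro x y q
  induction q with
  | @nil x =>
    intro hm
    obtain ⟨a, rfl⟩ : ∃ a, x = Sum.inl a := by
      cases x with
      | inl a => exact ⟨a, rfl⟩
      | inr u => cases u; exact absurd (by simp) hm
    exact ⟨a, a, SimpleGraph.Walk.nil, rfl, rfl, by simp, by simp⟩
  | @cons x y z h q ih =>
    intro hm
    rw [SimpleGraph.Walk.support_cons] at hm
    have hm' : (Sum.inr () : ι ⊕ Unit) ∉ q.support := fun hh => hm (List.mem_cons_of_mem _ hh)
    obtain ⟨a', b, q', rfl, rfl, hs, he⟩ := ih hm'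
    obtain ⟨a, rfl⟩ : ∃ a, x = Sum.inl a := by
      cases x with
      | inl a => exact ⟨a, rfl⟩
      | inr u => cases u; exact absurd List.mem_cons_self hm
    have hadj : T.Adj a a' := h
    refine ⟨a, b, SimpleGraph.Walk.cons hadj q', rfl, rfl, ?_, ?_⟩
    · rw [SimpleGraph.Walk.support_cons, SimpleGraph.Walk.support_cons, hs, List.map_cons]
    · rw [SimpleGraph.Walk.edges_cons, SimpleGraph.Walk.edges_cons, he, List.map_cons,
        Sym2.map_pair_eq]

lemma addLeaf_isTree {ι : Type} {T : SimpleGraph ι} (hT : T.IsTree) (r : ι) :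
    (addLeaf T r).IsTree := by
  classical
  let f : T →g addLeaf T r := ⟨Sum.inl, fun {a b} h => h⟩
  have hstep : (addLeaf T r).Adj (Sum.inl r) (Sum.inr ()) := rfl
  constructor
  · rw [SimpleGraph.connected_iff]
    refine ⟨?_, ⟨Sum.inr ()⟩⟩
    have hr : ∀ a : ι, (addLeaf T r).Reachable (Sum.inl a) (Sum.inr ()) := fun a =>
      ((hT.isConnected.preconnected a r).map f).trans hstep.reachable
    rintro (a | a) (b | b)
    · exact (hT.isConnected.preconnected a b).map f
    · exact hr a
    · exact (hr b).symm
    · cases a; cases b; exact SimpleGraph.Reachable.refl _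
  · intro v c hc
    rcases em ((Sum.inr () : ι ⊕ Unit) ∈ c.support) with hm | hm
    · have hc' : (c.rotate _ hm).IsCycle := hc.rotate hm
      set c' := c.rotate _ hm with hdef
      clear_value c'
      cases c' with
      | nil => exact hc'.ne_nil rfl
      | @cons _ y _ h p =>
        have hy : y = Sum.inl r := by
          cases y with
          | inl a => exact congrArg Sum.inl (show a = r from h)
          | inr u => exact (show False from h).elim
        subst hy
        have hmem := addLeaf_edge_mem p rfl (by simp)
        have hnd := hc'.isCircuit.isTrail.edges_nodup
        rw [SimpleGraph.Walk.edges_cons, List.nodup_cons] at hnd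
        rw [Sym2.eq_swap] at hmem
        exact hnd.1 hmem
    · obtain ⟨a, b, q', hxa, hxb, hs, he⟩ := addLeaf_walk_proj c hm
      obtain rfl : a = b := Sum.inl.inj (hxa.symm.trans hxb)
      refine hT.2 q' ⟨⟨⟨?_⟩, ?_⟩, ?_⟩
      · have h1 := hc.isCircuit.isTrail.edges_nodup
        rw [he] at h1
        exact h1.of_map _
      · intro hnil
        subst hnil
        apply hc.not_nil
        rw [SimpleGraph.Walk.nil_iff_length_eq]
        have h1 := SimpleGraph.Walk.length_support c
        rw [hs] at h1
        simp only [SimpleGraph.Walk.support_nil, List.map_cons, List.map_nil,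
          List.length_cons, List.length_nil] at h1
        omega
      · have h1 := hc.support_nodup
        rw [hs, ← List.map_tail] at h1
        exact h1.of_map _

lemma induce_connected_map {ι ι' : Type} {T : SimpleGraph ι} {T' : SimpleGraph ι'} {g : ι → ι'}
    (hg : ∀ a b, T.Adj a b → T'.Adj (g a) (g b)) {S : Set ι}
    (h : (T.induce S).Connected) : (T'.induce (g '' S)).Connected := by
  let f : T.induce S →g T'.induce (g '' S) :=
    ⟨fun p => ⟨g p.1, ⟨p.1, p.2, rfl⟩⟩, fun {a b} hab => hg _ _ hab⟩
  exact h.map f (by rintro ⟨y, x, hx, rfl⟩; exact ⟨⟨x, hx⟩, rfl⟩)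

lemma induce_connected_insert {ι : Type} {T : SimpleGraph ι} {S : Set ι} {n s₀ : ι}
    (hs₀ : s₀ ∈ S) (hadj : T.Adj n s₀) (h : (T.induce S).Connected) :
    (T.induce (insert n S)).Connected := by
  have key : ∀ p : ↥(insert n S),
      (T.induce (insert n S)).Reachable p ⟨s₀, Set.mem_insert_of_mem _ hs₀⟩ := by
    rintro ⟨p, hp⟩
    rcases Set.mem_insert_iff.mp hp with rfl | hp'
    · exact SimpleGraph.Adj.reachable hadj
    · let f : T.induce S →g T.induce (insert n S) :=
        ⟨fun q => ⟨q.1, Set.mem_insert_of_mem _ q.2⟩, fun {a b} hab => hab⟩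
      have h2 := (h.preconnected ⟨p, hp'⟩ ⟨s₀, hs₀⟩).map f
      exact h2
  rw [SimpleGraph.connected_iff]
  exact ⟨fun a b => (key a).trans (key b).symm, ⟨⟨n, Set.mem_insert _ _⟩⟩⟩

lemma induce_connected_singleton {ι : Type} (T : SimpleGraph ι) (n : ι) :
    (T.induce {n}).Connected := by
  rw [SimpleGraph.connected_iff]
  refine ⟨fun a b => ?_, ⟨⟨n, rfl⟩⟩⟩
  have : a = b := Subtype.ext (a.2.trans b.2.symm)
  rw [this]

lemma card_le_five {α : Type} [DecidableEq α] (a b c d e : α) :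
    ({a, b, c, d, e} : Finset α).card ≤ 5 := by
  refine (Finset.card_insert_le _ _).trans (Nat.succ_le_succ ?_)
  refine (Finset.card_insert_le _ _).trans (Nat.succ_le_succ ?_)
  refine (Finset.card_insert_le _ _).trans (Nat.succ_le_succ ?_)
  refine (Finset.card_insert_le _ _).trans (Nat.succ_le_succ ?_)
  simp

/-- The bag function for the extended tree decomposition. -/
def newBag {V ι : Type} [DecidableEq V] (bag : ι → Finset V) (u0 u1 w0 w1 : V) :
    (ι ⊕ Unit) ⊕ Unit → Finset (V ⊕ Fin 2) :=
  Sum.elim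
    (Sum.elim (fun j => (bag j).image Sum.inl)
      (fun _ => {Sum.inr 0, Sum.inl u0, Sum.inl u1, Sum.inl w0, Sum.inl w1}))
    (fun _ => {Sum.inr 0, Sum.inr 1, Sum.inl u1, Sum.inl w0, Sum.inl w1})

lemma fin2cases (a : Fin 2) : a = 0 ∨ a = 1 := by fin_cases a <;> simp

@[simp] lemma newBag_inl_inl {V ι : Type} [DecidableEq V] (bag : ι → Finset V) (u0 u1 w0 w1 : V) (j : ι) :
    newBag bag u0 u1 w0 w1 (Sum.inl (Sum.inl j)) = (bag j).image Sum.inl := rfl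

@[simp] lemma mem_newBag_N0_inl {V ι : Type} [DecidableEq V] (bag : ι → Finset V) (u0 u1 w0 w1 : V) (y : V) :
    (Sum.inl y : V ⊕ Fin 2) ∈ newBag bag u0 u1 w0 w1 (Sum.inl (Sum.inr ())) ↔
      y = u0 ∨ y = u1 ∨ y = w0 ∨ y = w1 := by
  simp [newBag]

@[simp] lemma mem_newBag_N0_inr {V ι : Type} [DecidableEq V] (bag : ι → Finset V) (u0 u1 w0 w1 : V)
    (m : Fin 2) :
    (Sum.inr m : V ⊕ Fin 2) ∈ newBag bag u0 u1 w0 w1 (Sum.inl (Sum.inr ())) ↔ m = 0 := by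
  simp [newBag]

@[simp] lemma mem_newBag_N1_inl {V ι : Type} [DecidableEq V] (bag : ι → Finset V) (u0 u1 w0 w1 : V) (y : V) :
    (Sum.inl y : V ⊕ Fin 2) ∈ newBag bag u0 u1 w0 w1 (Sum.inr ()) ↔
      y = u1 ∨ y = w0 ∨ y = w1 := by
  simp [newBag]

@[simp] lemma mem_newBag_N1_inr {V ι : Type} [DecidableEq V] (bag : ι → Finset V) (u0 u1 w0 w1 : V)
    (m : Fin 2) :
    (Sum.inr m : V ⊕ Fin 2) ∈ newBag bag u0 u1 w0 w1 (Sum.inr ()) ↔ m = 0 ∨ m = 1 := by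
  simp [newBag]

end AuxLemmas
theorem stmt5 {V : Type} [Fintype V] (G : SimpleGraph V) {k : ℕ} (L : ContainsLadder G k)
    (i : Fin k) (td : TreeDecomp G) (w : ℕ) (hw : td.width ≤ w) (B : td.ι)
    (hB : ∀ a : Fin 2, L.f (a, i.castSucc) ∈ td.bag B ∧ L.f (a, i.succ) ∈ td.bag B) :
    (∃ td' : TreeDecomp (insertRung G L i), td'.width ≤ max w 4) ∧
    (4 ≤ w → treewidth (insertRung G L i) ≤ w) := by
  classical
  letI : Fintype td.ι := td.fin
  -- abbreviations (not `set`, to keep definitional transparency)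
  let emb : td.ι → (td.ι ⊕ Unit) ⊕ Unit := fun j => Sum.inl (Sum.inl j)
  let N0 : (td.ι ⊕ Unit) ⊕ Unit := Sum.inl (Sum.inr ())
  let N1 : (td.ι ⊕ Unit) ⊕ Unit := Sum.inr ()
  let tr : SimpleGraph ((td.ι ⊕ Unit) ⊕ Unit) := addLeaf (addLeaf td.tree B) (Sum.inr ())
  let bagF : ((td.ι ⊕ Unit) ⊕ Unit) → Finset (V ⊕ Fin 2) :=
    newBag td.bag (L.f (0, i.castSucc)) (L.f (1, i.castSucc)) (L.f (0, i.succ)) (L.f (1, i.succ))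
  have hemb : ∀ a b, td.tree.Adj a b → tr.Adj (emb a) (emb b) := fun _ _ h => h
  have hN0B : tr.Adj N0 (emb B) := rfl
  have hN1N0 : tr.Adj N1 N0 := rfl
  have hN0N1 : tr.Adj N0 N1 := rfl
  have main : ∃ td' : TreeDecomp (insertRung G L i), td'.width ≤ max w 4 := by
    refine ⟨{ ι := (td.ι ⊕ Unit) ⊕ Unit
              fin := inferInstance
              tree := tr
              isTree := addLeaf_isTree (addLeaf_isTree td.isTree B) (Sum.inr ())
              bag := bagF
              cover_vertex := ?_
              cover_edge := ?_
              bag_connected := ?_ }, ?_⟩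
    · -- cover_vertex
      rintro (y | m)
      · obtain ⟨j, hj⟩ := td.cover_vertex y
        exact ⟨emb j, Finset.mem_image_of_mem _ hj⟩
      · rcases fin2cases m with rfl | rfl
        · exact ⟨N0, by simp [bagF, N0]⟩
        · exact ⟨N1, by simp [bagF, N1]⟩
    · -- cover_edge
      intro p q hpq
      have inner : ∀ p q : V ⊕ Fin 2,
          ((∃ a b : V, p = Sum.inl a ∧ q = Sum.inl b ∧ G.Adj a b ∧
              ∀ c : Fin 2, s(a, b) ≠ s(L.f (c, i.castSucc), L.f (c, i.succ))) ∨
            (∃ a : Fin 2, p = Sum.inl (L.f (a, i.castSucc)) ∧ q = Sum.inr a) ∨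
            (∃ a : Fin 2, p = Sum.inr a ∧ q = Sum.inl (L.f (a, i.succ))) ∨
            (p = Sum.inr (0 : Fin 2) ∧ q = Sum.inr (1 : Fin 2))) →
          ∃ i', p ∈ bagF i' ∧ q ∈ bagF i' := by
        rintro p q (⟨a, b, rfl, rfl, hab, -⟩ | ⟨a, rfl, rfl⟩ | ⟨a, rfl, rfl⟩ | ⟨rfl, rfl⟩)
        · obtain ⟨j, h1, h2⟩ := td.cover_edge hab
          exact ⟨emb j, Finset.mem_image_of_mem _ h1, Finset.mem_image_of_mem _ h2⟩
        · rcases fin2cases a with rfl | rfl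
          · exact ⟨N0, by simp [bagF, N0], by simp [bagF, N0]⟩
          · exact ⟨N1, by simp [bagF, N1], by simp [bagF, N1]⟩
        · rcases fin2cases a with rfl | rfl
          · exact ⟨N0, by simp [bagF, N0], by simp [bagF, N0]⟩
          · exact ⟨N1, by simp [bagF, N1], by simp [bagF, N1]⟩
        · exact ⟨N1, by simp [bagF, N1], by simp [bagF, N1]⟩
      rw [insertRung, SimpleGraph.fromRel_adj] at hpq
      rcases hpq.2 with h | h
      · exact inner p q h
      · obtain ⟨i', h1, h2⟩ := inner q p h
        exact ⟨i', h2, h1⟩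
    · -- bag_connected
      rintro (y | m)
      · by_cases h1 : y = L.f (1, i.castSucc) ∨ y = L.f (0, i.succ) ∨ y = L.f (1, i.succ)
        · have hSet : {i' | Sum.inl y ∈ bagF i'} =
              insert N1 (insert N0 (emb '' {j | y ∈ td.bag j})) := by
            ext i'
            rcases i' with (j | u) | u
            · simp [bagF, emb, N0, N1, Set.mem_image]
            · cases u
              rcases h1 with rfl | rfl | rfl <;>
                simp [bagF, emb, N0, N1]
            · cases u
              rcases h1 with rfl | rfl | rfl <;>
                simp [bagF, emb, N0, N1]
          rw [hSet]
          have hBy : B ∈ {j | y ∈ td.bag j} := by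
            rcases h1 with rfl | rfl | rfl
            · exact (hB 1).1
            · exact (hB 0).2
            · exact (hB 1).2
          exact induce_connected_insert (Set.mem_insert _ _) hN1N0
            (induce_connected_insert ⟨B, hBy, rfl⟩ hN0B
              (induce_connected_map hemb (td.bag_connected y)))
        · push_neg at h1
          obtain ⟨h11, h12, h13⟩ := h1
          by_cases h0 : y = L.f (0, i.castSucc)
          · have hSet : {i' | Sum.inl y ∈ bagF i'} =
                insert N0 (emb '' {j | y ∈ td.bag j}) := by
              ext i'
              rcases i' with (j | u) | u
              · simp [bagF, emb, N0, N1, Set.mem_image]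
              · cases u; subst h0; simp [bagF, emb, N0, N1]
              · cases u; simp [bagF, emb, N0, N1, h11, h12, h13]
            rw [hSet]
            have hBy : B ∈ {j | y ∈ td.bag j} := by subst h0; exact (hB 0).1
            exact induce_connected_insert ⟨B, hBy, rfl⟩ hN0B
              (induce_connected_map hemb (td.bag_connected y))
          · have hSet : {i' | Sum.inl y ∈ bagF i'} = emb '' {j | y ∈ td.bag j} := by
              ext i'
              rcases i' with (j | u) | u
              · simp [bagF, emb, N0, N1, Set.mem_image]
              · cases u; simp [bagF, emb, N0, N1, h0, h11, h12, h13]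
              · cases u; simp [bagF, emb, N0, N1, h11, h12, h13]
            rw [hSet]
            exact induce_connected_map hemb (td.bag_connected y)
      · rcases fin2cases m with rfl | rfl
        · have hSet : {i' | (Sum.inr (0 : Fin 2) : V ⊕ Fin 2) ∈ bagF i'} =
              insert N0 ({N1} : Set ((td.ι ⊕ Unit) ⊕ Unit)) := by
            ext i'
            rcases i' with (j | u) | u
            · simp [bagF, emb, N0, N1]
            · cases u; simp [bagF, N0, N1]
            · cases u; simp [bagF, N0, N1]
          rw [hSet]
          exact induce_connected_insert rfl hN0N1 (induce_connected_singleton _ _)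
        · have hSet : {i' | (Sum.inr (1 : Fin 2) : V ⊕ Fin 2) ∈ bagF i'} =
              ({N1} : Set ((td.ι ⊕ Unit) ⊕ Unit)) := by
            ext i'
            rcases i' with (j | u) | u
            · simp [bagF, emb, N0, N1]
            · cases u; simp [bagF, N0, N1]
            · cases u; simp [bagF, N0, N1]
          rw [hSet]
          exact induce_connected_singleton _ _
    · -- width bound
      have hb : ∀ j, (td.bag j).card ≤ w + 1 := by
        intro j
        have h1 : (td.bag j).card ≤ Finset.univ.sup fun j => (td.bag j).card :=
          Finset.le_sup (f := fun j => (td.bag j).card) (Finset.mem_univ j)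
        have h2 : (Finset.univ.sup fun j => (td.bag j).card) - 1 ≤ w := hw
        omega
      show (Finset.univ.sup fun i' => (bagF i').card) - 1 ≤ max w 4
      rw [tsub_le_iff_right]
      apply Finset.sup_le
      rintro ((j | u) | u) -
      · refine (Finset.card_image_le.trans (hb j)).trans ?_
        exact Nat.add_le_add_right (le_max_left w 4) 1
      · cases u
        refine (card_le_five _ _ _ _ _).trans ?_
        exact Nat.succ_le_succ (le_max_right w 4)
      · cases u
        refine (card_le_five _ _ _ _ _).trans ?_
        exact Nat.succ_le_succ (le_max_right w 4)
  refine ⟨main, fun h4 => ?_⟩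
  obtain ⟨td', htd'⟩ := main
  have hle : td'.width ≤ w := htd'.trans (max_le le_rfl h4)
  exact le_trans (Nat.sInf_le ⟨td', rfl⟩) hle
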